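/- For every real z and every x, the Stein solution satisfies 0 < f_z(x) ≤ √(2π)/4, where f_z(x) = √(2π) e^{x²/2} Φ(x) (1 - Φ(z)) for x ≤ z and f_z(x) = √(2π) e^{x²/2} (1 - Φ(x)) Φ(z) for x > z. -/

import Mathlib

open MeasureTheory Real Set Filter

noncomputable def stdPhi (x : ℝ) : ℝ :=
  (Real.sqrt (2 * Real.pi))⁻¹ * ∫ u in Set.Iic x, Real.exp (-u ^ 2 / 2)

lemma gauss_eq : (fun u : ℝ => Real.exp (-u ^ 2 / 2)) = fun u : ℝ => Real.exp (-(1/2) * u ^ 2) := by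
  funext u; ring_nf

lemma gauss_integrable : Integrable (fun u : ℝ => Real.exp (-u ^ 2 / 2)) := by
  rw [gauss_eq]; exact integrable_exp_neg_mul_sq (by norm_num)

lemma gauss_integral : ∫ u : ℝ, Real.exp (-u ^ 2 / 2) = Real.sqrt (2 * Real.pi) := by
  rw [gauss_eq, integral_gaussian, div_div_eq_mul_div, div_one, mul_comm]

lemma sqrt2pi_pos : 0 < Real.sqrt (2 * Real.pi) :=
  Real.sqrt_pos.2 (by positivity)

lemma iic_integral_pos (x : ℝ) : 0 < ∫ u in Set.Iic x, Real.exp (-u ^ 2 / 2) := by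
  rw [setIntegral_pos_iff_support_of_nonneg_ae]
  · have : Function.support (fun u : ℝ => Real.exp (-u ^ 2 / 2)) = Set.univ := by
      ext u; simp [Function.mem_support, Real.exp_ne_zero]
    rw [this, Set.univ_inter]
    simp [Real.volume_Iic]
  · exact Filter.Eventually.of_forall fun u => (Real.exp_pos _).le
  · exact gauss_integrable.integrableOn

lemma stdPhi_pos (x : ℝ) : 0 < stdPhi x :=
  mul_pos (inv_pos.2 sqrt2pi_pos) (iic_integral_pos x)

lemma iic_add_ioi (x : ℝ) :
    (∫ u in Set.Iic x, Real.exp (-u ^ 2 / 2)) + ∫ u in Set.Ioi x, Real.exp (-u ^ 2 / 2)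
      = Real.sqrt (2 * Real.pi) := by
  rw [← gauss_integral]
  exact intervalIntegral.integral_Iic_add_Ioi gauss_integrable.integrableOn gauss_integrable.integrableOn

lemma ioi_integral_pos (x : ℝ) : 0 < ∫ u in Set.Ioi x, Real.exp (-u ^ 2 / 2) := by
  rw [setIntegral_pos_iff_support_of_nonneg_ae]
  · have : Function.support (fun u : ℝ => Real.exp (-u ^ 2 / 2)) = Set.univ := by
      ext u; simp [Function.mem_support, Real.exp_ne_zero]
    rw [this, Set.univ_inter]
    simp [Real.volume_Ioi]
  · exact Filter.Eventually.of_forall fun u => (Real.exp_pos _).le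
  · exact gauss_integrable.integrableOn

lemma stdPhi_lt_one (x : ℝ) : stdPhi x < 1 := by
  have h := iic_add_ioi x
  have h2 : (∫ u in Set.Iic x, Real.exp (-u ^ 2 / 2)) < Real.sqrt (2 * Real.pi) := by
    linarith [ioi_integral_pos x]
  calc stdPhi x < (Real.sqrt (2 * Real.pi))⁻¹ * Real.sqrt (2 * Real.pi) :=
        (mul_lt_mul_iff_right₀ (inv_pos.2 sqrt2pi_pos)).2 h2
    _ = 1 := inv_mul_cancel₀ sqrt2pi_pos.ne'

lemma stdPhi_mono : Monotone stdPhi := by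
  intro a b hab
  apply mul_le_mul_of_nonneg_left _ (inv_pos.2 sqrt2pi_pos).le
  apply setIntegral_mono_set gauss_integrable.integrableOn
    (Filter.Eventually.of_forall fun u => (Real.exp_pos _).le)
  exact Filter.Eventually.of_forall (Set.Iic_subset_Iic.2 hab)

lemma stdPhi_neg (x : ℝ) : stdPhi (-x) = 1 - stdPhi x := by
  have h1 : (∫ u in Set.Iic (-x), Real.exp (-u ^ 2 / 2))
      = ∫ u in Set.Ioi x, Real.exp (-u ^ 2 / 2) := by
    have h := integral_comp_neg_Iic (-x) (fun u => Real.exp (-u ^ 2 / 2))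
    simp only [neg_neg] at h
    rw [← h]; congr 1; funext u; ring_nf
  have key : stdPhi x + stdPhi (-x) = 1 := by
    unfold stdPhi
    rw [h1, ← mul_add, iic_add_ioi, inv_mul_cancel₀ sqrt2pi_pos.ne']
  linarith

noncomputable def Fg (x : ℝ) : ℝ := ∫ u in (0:ℝ)..x, Real.exp (-u ^ 2 / 2)

lemma Fg_zero : Fg 0 = 0 := intervalIntegral.integral_same

lemma gauss_cont : Continuous fun u : ℝ => Real.exp (-u ^ 2 / 2) := by
  continuity

lemma hasDerivAt_Fg (x : ℝ) : HasDerivAt Fg (Real.exp (-x ^ 2 / 2)) x := by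
  refine intervalIntegral.integral_hasDerivAt_right
    gauss_integrable.intervalIntegrable ?_ gauss_cont.continuousAt
  exact gauss_cont.stronglyMeasurableAtFilter _ _

lemma stdPhi_zero : stdPhi 0 = 1/2 := by
  have := stdPhi_neg 0
  rw [neg_zero] at this
  linarith

lemma stdPhi_eq (x : ℝ) : stdPhi x = 1/2 + (Real.sqrt (2 * Real.pi))⁻¹ * Fg x := by
  have h := intervalIntegral.integral_Iic_sub_Iic (μ := volume)
    (f := fun u : ℝ => Real.exp (-u ^ 2 / 2))
    gauss_integrable.integrableOn gauss_integrable.integrableOn (a := 0) (b := x)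
  have h2 : stdPhi x - stdPhi 0 = (Real.sqrt (2 * Real.pi))⁻¹ * Fg x := by
    unfold stdPhi Fg
    rw [← mul_sub, h]
  rw [stdPhi_zero] at h2
  linarith

lemma Fg_lim : Tendsto Fg atTop (nhds (Real.sqrt (2 * Real.pi) / 2)) := by
  have h0 : (∫ u in Set.Iic (0:ℝ), Real.exp (-u ^ 2 / 2)) = Real.sqrt (2 * Real.pi) / 2 := by
    have := stdPhi_zero
    unfold stdPhi at this
    field_simp at this ⊢
    linarith
  have hIoi : (∫ u in Set.Ioi (0:ℝ), Real.exp (-u ^ 2 / 2)) = Real.sqrt (2 * Real.pi) / 2 := by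
    have := iic_add_ioi 0
    rw [h0] at this
    linarith
  have := MeasureTheory.intervalIntegral_tendsto_integral_Ioi 0
    gauss_integrable.integrableOn tendsto_id
  rwa [hIoi] at this

noncomputable def Wf (x : ℝ) : ℝ := Fg x ^ 2 - (Real.pi / 2) * (1 - Real.exp (-x ^ 2 / 2))

lemma hasDerivAt_gaussExp (x : ℝ) :
    HasDerivAt (fun x : ℝ => Real.exp (-x ^ 2 / 2)) (Real.exp (-x ^ 2 / 2) * (-x)) x := by
  have h1 : HasDerivAt (fun x : ℝ => -x ^ 2 / 2) (-x) x := by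
    have := ((hasDerivAt_pow 2 x).neg).div_const 2
    refine this.congr_deriv ?_
    simp; ring
  exact (Real.hasDerivAt_exp _).comp x h1

lemma hasDerivAt_Wf (x : ℝ) :
    HasDerivAt Wf (Real.exp (-x ^ 2 / 2) * (2 * Fg x - (Real.pi / 2) * x)) x := by
  have h1 := (hasDerivAt_Fg x).pow 2
  have h2 := ((hasDerivAt_gaussExp x).const_sub 1).const_mul (Real.pi / 2)
  have := h1.sub h2
  refine this.congr_deriv ?_
  ring

lemma Wf_zero : Wf 0 = 0 := by
  unfold Wf
  rw [Fg_zero]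
  norm_num

lemma Wf_lim : Tendsto Wf atTop (nhds 0) := by
  have h1 : Tendsto (fun x : ℝ => Fg x ^ 2) atTop (nhds ((Real.sqrt (2 * Real.pi) / 2) ^ 2)) :=
    Fg_lim.pow 2
  have hsq : (Real.sqrt (2 * Real.pi) / 2) ^ 2 = Real.pi / 2 := by
    rw [div_pow, Real.sq_sqrt (by positivity)]
    ring
  rw [hsq] at h1
  have h2 : Tendsto (fun x : ℝ => Real.exp (-x ^ 2 / 2)) atTop (nhds 0) := by
    apply Real.tendsto_exp_atBot.comp
    apply Filter.Tendsto.atBot_div_const (by norm_num : (0:ℝ) < 2)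
    exact tendsto_neg_atBot_iff.2 (tendsto_pow_atTop (by norm_num))
  have h3 : Tendsto (fun x : ℝ => (Real.pi / 2) * (1 - Real.exp (-x ^ 2 / 2))) atTop
      (nhds ((Real.pi / 2) * (1 - 0))) :=
    (tendsto_const_nhds.sub h2).const_mul _
  have := h1.sub h3
  show Tendsto (fun x => Fg x ^ 2 - (Real.pi / 2) * (1 - Real.exp (-x ^ 2 / 2))) atTop (nhds 0)
  simpa using this

noncomputable def Ug (x : ℝ) : ℝ := 2 * Fg x - (Real.pi / 2) * x

lemma hasDerivAt_Ug (x : ℝ) :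
    HasDerivAt Ug (2 * Real.exp (-x ^ 2 / 2) - Real.pi / 2) x := by
  have h1 := (hasDerivAt_Fg x).const_mul 2
  have h2 := (hasDerivAt_id x).const_mul (Real.pi / 2)
  have := h1.sub h2
  refine this.congr_deriv ?_
  simp

lemma Ug_deriv_eq : deriv Ug = fun x => 2 * Real.exp (-x ^ 2 / 2) - Real.pi / 2 := by
  funext x; exact (hasDerivAt_Ug x).deriv

lemma Ug_zero : Ug 0 = 0 := by unfold Ug; rw [Fg_zero]; ring

lemma Ug_concave : ConcaveOn ℝ (Set.Ici (0:ℝ)) Ug := by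
  apply AntitoneOn.concaveOn_of_deriv (convex_Ici 0)
  · exact Continuous.continuousOn (by
      have : Continuous Fg := (fun x => (hasDerivAt_Fg x).differentiableAt.continuousAt)
        |> fun h => ?_
      · exact (continuous_iff_continuousAt.2 fun x =>
          (hasDerivAt_Ug x).differentiableAt.continuousAt)
      · exact continuous_iff_continuousAt.2 h)
  · exact fun x _ => ((hasDerivAt_Ug x).differentiableAt).differentiableWithinAt
  · rw [Ug_deriv_eq]
    intro a ha b hb hab
    rw [interior_Ici] at ha hb
    have h1 : a ^ 2 ≤ b ^ 2 := by nlinarith [le_of_lt (Set.mem_Ioi.1 ha), le_of_lt (Set.mem_Ioi.1 hb)]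
    have := Real.exp_le_exp.2 (by linarith : -b ^ 2 / 2 ≤ -a ^ 2 / 2)
    linarith

lemma Wf_nonneg {x : ℝ} (hx : 0 ≤ x) : 0 ≤ Wf x := by
  rcases le_or_gt 0 (Ug x) with hU | hU
  · -- monotone on [0, x]
    have hmono : MonotoneOn Wf (Set.Icc 0 x) := by
      apply monotoneOn_of_deriv_nonneg (convex_Icc 0 x)
      · exact Continuous.continuousOn (continuous_iff_continuousAt.2 fun t =>
          (hasDerivAt_Wf t).differentiableAt.continuousAt)
      · exact fun t _ => ((hasDerivAt_Wf t).differentiableAt).differentiableWithinAt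
      · intro t ht
        rw [interior_Icc] at ht
        rw [(hasDerivAt_Wf t).deriv]
        have hmin : min (Ug 0) (Ug x) ≤ Ug t :=
          Ug_concave.min_le_of_mem_Icc (Set.self_mem_Ici) (Set.mem_Ici.2 hx)
            ⟨ht.1.le, ht.2.le⟩
        rw [Ug_zero] at hmin
        have hut : 0 ≤ Ug t := le_trans (le_min le_rfl hU) hmin
        have : 0 ≤ 2 * Fg t - (Real.pi / 2) * t := hut
        positivity
    have := hmono (Set.left_mem_Icc.2 hx) (Set.right_mem_Icc.2 hx) hx
    rwa [Wf_zero] at this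
  · -- x > 0, Ug negative beyond x, Wf antitone on [x, ∞), limit 0
    have hx0 : 0 < x := by
      rcases eq_or_lt_of_le hx with h | h
      · exfalso; rw [← h, Ug_zero] at hU; exact absurd hU (lt_irrefl 0)
      · exact h
    have hUneg : ∀ t, x ≤ t → Ug t ≤ 0 := by
      intro t hxt
      have ht0 : 0 < t := lt_of_lt_of_le hx0 hxt
      -- concavity : Ug x ≥ (x/t) * Ug t + (1 - x/t) * Ug 0
      have hcomb := Ug_concave.2 (Set.mem_Ici.2 le_rfl : (0:ℝ) ∈ Set.Ici (0:ℝ))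
        (Set.mem_Ici.2 ht0.le) (by rw [sub_nonneg]; exact (div_le_one ht0).2 hxt : (0:ℝ) ≤ 1 - x/t)
        (by positivity : (0:ℝ) ≤ x/t) (by field_simp; ring)
      rw [Ug_zero, smul_zero, zero_add] at hcomb
      have hxt' : (0:ℝ) + (x/t) • t = x := by
        rw [zero_add, smul_eq_mul]; field_simp
      rw [hxt', smul_eq_mul] at hcomb
      nlinarith [div_pos hx0 ht0]
    have hanti : AntitoneOn Wf (Set.Ici x) := by
      apply antitoneOn_of_deriv_nonpos (convex_Ici x)
      · exact Continuous.continuousOn (continuous_iff_continuousAt.2 fun t =>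
          (hasDerivAt_Wf t).differentiableAt.continuousAt)
      · exact fun t _ => ((hasDerivAt_Wf t).differentiableAt).differentiableWithinAt
      · intro t ht
        rw [interior_Ici] at ht
        rw [(hasDerivAt_Wf t).deriv]
        have h1 : Ug t ≤ 0 := hUneg t ht.le
        have h2 : (0:ℝ) < Real.exp (-t ^ 2 / 2) := Real.exp_pos _
        have : 2 * Fg t - Real.pi / 2 * t ≤ 0 := h1
        nlinarith
    apply le_of_tendsto Wf_lim
    filter_upwards [eventually_ge_atTop x] with t ht
    exact hanti (Set.self_mem_Ici) (Set.mem_Ici.2 ht) ht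

lemma key_nonneg (x : ℝ) (hx : 0 ≤ x) :
    stdPhi x * (1 - stdPhi x) ≤ Real.exp (-x ^ 2 / 2) / 4 := by
  have hW := Wf_nonneg hx
  unfold Wf at hW
  have hphi := stdPhi_eq x
  have hs2 : Real.sqrt (2 * Real.pi) ^ 2 = 2 * Real.pi := Real.sq_sqrt (by positivity)
  have hspos := sqrt2pi_pos
  have hE : Real.exp (-x ^ 2 / 2) ≤ 1 := by
    rw [Real.exp_le_one_iff]
    nlinarith
  -- stdPhi x * (1 - stdPhi x) = 1/4 - (s⁻¹ Fg x)^2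
  have h1 : stdPhi x * (1 - stdPhi x) = 1/4 - ((Real.sqrt (2 * Real.pi))⁻¹ * Fg x) ^ 2 := by
    rw [hphi]; ring
  have h2 : ((Real.sqrt (2 * Real.pi))⁻¹ * Fg x) ^ 2 = Fg x ^ 2 / (2 * Real.pi) := by
    rw [mul_pow, inv_pow, hs2]
    ring
  rw [h1, h2]
  have hpi := Real.pi_pos
  have h3 : (1 - Real.exp (-x ^ 2 / 2)) / 4 ≤ Fg x ^ 2 / (2 * Real.pi) := by
    rw [div_le_div_iff₀ (by norm_num) (by positivity)]
    nlinarith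
  linarith

lemma key (x : ℝ) : stdPhi x * (1 - stdPhi x) ≤ Real.exp (-x ^ 2 / 2) / 4 := by
  rcases le_or_gt 0 x with hx | hx
  · exact key_nonneg x hx
  · have h := key_nonneg (-x) (by linarith)
    rw [stdPhi_neg] at h
    have hpow : (-x) ^ 2 = x ^ 2 := by ring
    rw [hpow] at h
    calc stdPhi x * (1 - stdPhi x) = (1 - stdPhi x) * (1 - (1 - stdPhi x)) := by ring
      _ ≤ Real.exp (-x ^ 2 / 2) / 4 := h

noncomputable def steinF (z x : ℝ) : ℝ :=
  if x ≤ z then Real.sqrt (2 * Real.pi) * Real.exp (x ^ 2 / 2) * stdPhi x * (1 - stdPhi z)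
  else Real.sqrt (2 * Real.pi) * Real.exp (x ^ 2 / 2) * (1 - stdPhi x) * stdPhi z

lemma exp_mul_exp_neg (x : ℝ) : Real.exp (x ^ 2 / 2) * Real.exp (-x ^ 2 / 2) = 1 := by
  rw [← Real.exp_add]; ring_nf; exact Real.exp_zero

theorem steinF_global_bound (z x : ℝ) :
    0 < steinF z x ∧ steinF z x ≤ Real.sqrt (2 * Real.pi) / 4 := by
  have hspos := sqrt2pi_pos
  have hepos : (0:ℝ) < Real.exp (x ^ 2 / 2) := Real.exp_pos _
  have hPx := stdPhi_pos x
  have hPz := stdPhi_pos z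
  have hx1 := stdPhi_lt_one x
  have hz1 := stdPhi_lt_one z
  have hkey := key x
  have hexp := exp_mul_exp_neg x
  unfold steinF
  split_ifs with h
  · have hmono : stdPhi x ≤ stdPhi z := stdPhi_mono h
    constructor
    · have : 0 < 1 - stdPhi z := by linarith
      positivity
    · have h1 : Real.sqrt (2 * Real.pi) * Real.exp (x ^ 2 / 2) * stdPhi x * (1 - stdPhi z)
          ≤ Real.sqrt (2 * Real.pi) * (Real.exp (x ^ 2 / 2) * (stdPhi x * (1 - stdPhi x))) := by
        rw [mul_assoc, mul_assoc, ← mul_assoc (Real.exp (x ^ 2 / 2))]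
        apply mul_le_mul_of_nonneg_left _ hspos.le
        rw [mul_assoc]
        apply mul_le_mul_of_nonneg_left _ hepos.le
        apply mul_le_mul_of_nonneg_left (by linarith) hPx.le
      have h2 : Real.exp (x ^ 2 / 2) * (stdPhi x * (1 - stdPhi x))
          ≤ Real.exp (x ^ 2 / 2) * (Real.exp (-x ^ 2 / 2) / 4) :=
        mul_le_mul_of_nonneg_left hkey hepos.le
      have h3 : Real.exp (x ^ 2 / 2) * (Real.exp (-x ^ 2 / 2) / 4) = 1 / 4 := by
        rw [mul_div_assoc'] at *
        rw [hexp]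
      calc Real.sqrt (2 * Real.pi) * Real.exp (x ^ 2 / 2) * stdPhi x * (1 - stdPhi z)
          ≤ Real.sqrt (2 * Real.pi) * (Real.exp (x ^ 2 / 2) * (stdPhi x * (1 - stdPhi x))) := h1
        _ ≤ Real.sqrt (2 * Real.pi) * (1 / 4) := by
            apply mul_le_mul_of_nonneg_left _ hspos.le
            rw [← h3]; exact h2
        _ = Real.sqrt (2 * Real.pi) / 4 := by ring
  · push_neg at h
    have hmono : stdPhi z ≤ stdPhi x := stdPhi_mono h.le
    constructor
    · have : 0 < 1 - stdPhi x := by linarith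
      positivity
    · have h1 : Real.sqrt (2 * Real.pi) * Real.exp (x ^ 2 / 2) * (1 - stdPhi x) * stdPhi z
          ≤ Real.sqrt (2 * Real.pi) * (Real.exp (x ^ 2 / 2) * (stdPhi x * (1 - stdPhi x))) := by
        rw [mul_assoc, mul_assoc, ← mul_assoc (Real.exp (x ^ 2 / 2))]
        apply mul_le_mul_of_nonneg_left _ hspos.le
        rw [mul_assoc]
        apply mul_le_mul_of_nonneg_left _ hepos.le
        calc (1 - stdPhi x) * stdPhi z ≤ (1 - stdPhi x) * stdPhi x :=
              mul_le_mul_of_nonneg_left hmono (by linarith)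
          _ = stdPhi x * (1 - stdPhi x) := by ring
      have h2 : Real.exp (x ^ 2 / 2) * (stdPhi x * (1 - stdPhi x))
          ≤ Real.exp (x ^ 2 / 2) * (Real.exp (-x ^ 2 / 2) / 4) :=
        mul_le_mul_of_nonneg_left hkey hepos.le
      have h3 : Real.exp (x ^ 2 / 2) * (Real.exp (-x ^ 2 / 2) / 4) = 1 / 4 := by
        rw [mul_div_assoc'] at *
        rw [hexp]
      calc Real.sqrt (2 * Real.pi) * Real.exp (x ^ 2 / 2) * (1 - stdPhi x) * stdPhi z
          ≤ Real.sqrt (2 * Real.pi) * (Real.exp (x ^ 2 / 2) * (stdPhi x * (1 - stdPhi x))) := h1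
        _ ≤ Real.sqrt (2 * Real.pi) * (1 / 4) := by
            apply mul_le_mul_of_nonneg_left _ hspos.le
            rw [← h3]; exact h2
        _ = Real.sqrt (2 * Real.pi) / 4 := by ring
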